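/- arXiv:1805.10223 — 5 statements merged into one kernel-verified Lean document; each statement's English description precedes it below -/
import Mathlib

section
/- Let R be an order in an étale ℚ-algebra K and I a fractional R-ideal with trace dual I^t = {z ∈ K : Tr_{K/ℚ}(zI) ⊆ ℤ}. Then I^t is a fractional R-ideal and has the same multiplicator ring as I, i.e., (I^t : I^t) = (I : I). -/
/-- An order in the étale ℚ-algebra `K`. -/
def IsZOrder (K : Type*) [CommRing K] [Algebra ℚ K] (R : Subalgebra ℤ K) : Prop :=
  Module.Free ℤ R ∧ Module.finrank ℤ R = Module.finrank ℚ K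

/-- A fractional `R`-ideal. -/
def IsFracIdeal {K : Type*} [CommRing K] [Algebra ℚ K] (R : Subalgebra ℤ K)
    (I : Submodule R K) : Prop :=
  I.FG ∧ ∃ x ∈ I, x ∈ nonZeroDivisors K

/-- The multiplicator ring `(I : I)` as a submodule: `{x ∈ K : xI ⊆ I}`. -/
def multSet {K : Type*} [CommRing K] [Algebra ℚ K] (R : Subalgebra ℤ K)
    (I : Submodule R K) : Set K :=
  {x | ∀ y ∈ I, x * y ∈ I}

/-- The trace dual `I^t = {z ∈ K : Tr_{K/ℚ}(zI) ⊆ ℤ}`. -/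
def traceDual {K : Type*} [CommRing K] [Algebra ℚ K] [FiniteDimensional ℚ K]
    (R : Subalgebra ℤ K) (I : Submodule R K) : Submodule R K where
  carrier := {z | ∀ y ∈ I, ∃ n : ℤ, Algebra.trace ℚ K (z * y) = (n : ℚ)}
  add_mem' := by
    intro a b ha hb y hy
    obtain ⟨n, hn⟩ := ha y hy
    obtain ⟨m, hm⟩ := hb y hy
    exact ⟨n + m, by rw [add_mul, map_add, hn, hm, Int.cast_add]⟩
  zero_mem' := by
    intro y hy
    exact ⟨0, by rw [zero_mul, map_zero, Int.cast_zero]⟩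
  smul_mem' := by
    intro c z hz y hy
    have h1 : (c • z) * y = z * (c • y) := by
      rw [Algebra.smul_def, Algebra.smul_def]; ring
    rw [h1]
    exact hz _ (I.smul_mem c hy)

open Module

section Aux

variable {K : Type*} [CommRing K] [Algebra ℚ K]

/-- Clearing denominators. -/
lemma exists_int_smul_mem_span {s : Set K} {x : K} (hx : x ∈ Submodule.span ℚ s) :
    ∃ m : ℤ, m ≠ 0 ∧ m • x ∈ Submodule.span ℤ s := by
  induction hx using Submodule.span_induction with
  | mem y hy => exact ⟨1, one_ne_zero, by simpa using Submodule.subset_span hy⟩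
  | zero => exact ⟨1, one_ne_zero, by simp⟩
  | add y z _ _ hy hz =>
      obtain ⟨m, hm, hmy⟩ := hy
      obtain ⟨n, hn, hnz⟩ := hz
      refine ⟨m * n, mul_ne_zero hm hn, ?_⟩
      rw [smul_add]
      have h1 : (m * n) • y = n • (m • y) := by rw [mul_comm, mul_smul]
      have h2 : (m * n) • z = m • (n • z) := by rw [mul_smul]
      rw [h1, h2]
      exact add_mem (Submodule.smul_mem _ n hmy) (Submodule.smul_mem _ m hnz)
  | smul q y _ hy =>
      obtain ⟨m, hm, hmy⟩ := hy
      refine ⟨(q.den : ℤ) * m, mul_ne_zero (by exact_mod_cast q.den_nz) hm, ?_⟩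
      have hq : (q.den : ℚ) * q = (q.num : ℚ) := by
        have hd : (q.den : ℚ) ≠ 0 := by exact_mod_cast q.den_nz
        rw [mul_comm]
        exact ((div_eq_iff hd).mp (Rat.num_div_den q)).symm
      have key : ((q.den : ℤ) * m) • (q • y) = q.num • (m • y) := by
        rw [← Int.cast_smul_eq_zsmul ℚ, smul_smul, ← mul_smul,
          ← Int.cast_smul_eq_zsmul ℚ (q.num * m) y]
        congr 1
        push_cast
        linear_combination (m : ℚ) * hq
      rw [key]
      exact Submodule.smul_mem _ _ hmy

variable [FiniteDimensional ℚ K]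

lemma trace_idem_ne_zero {e : K} (he : IsIdempotentElem e) (he0 : e ≠ 0) :
    Algebra.trace ℚ K e ≠ 0 := by
  have hproj : LinearMap.IsProj (LinearMap.range (LinearMap.mulLeft ℚ e))
      (LinearMap.mulLeft ℚ e) := by
    constructor
    · intro x; exact LinearMap.mem_range_self _ x
    · rintro x ⟨y, rfl⟩
      simp only [LinearMap.mulLeft_apply, ← mul_assoc, he.eq]
  rw [Algebra.trace_apply]
  have h1 : (Algebra.lmul ℚ K) e = LinearMap.mulLeft ℚ e := rfl
  rw [h1, hproj.trace]
  have hnt : Nontrivial ↥(LinearMap.range (LinearMap.mulLeft ℚ e)) := by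
    refine nontrivial_of_ne ⟨e, ⟨1, by simp⟩⟩ 0 ?_
    intro h
    exact he0 (congrArg Subtype.val h)
  have hpos : 0 < finrank ℚ ↥(LinearMap.range (LinearMap.mulLeft ℚ e)) := finrank_pos
  exact_mod_cast hpos.ne'

lemma traceForm_nondeg [IsReduced K] : (Algebra.traceForm ℚ K).Nondegenerate := by
  suffices hL : LinearMap.SeparatingLeft (Algebra.traceForm ℚ K) from
    ⟨hL, fun y hy => hL y fun x => by simpa [Algebra.traceForm_apply, mul_comm] using hy x⟩
  intro z hz
  by_contra h0
  have hart : IsArtinianRing K := isArtinian_of_tower ℚ inferInstance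
  letI : ∀ I : MaximalSpectrum K, Field (K ⧸ I.asIdeal) :=
    IsArtinianRing.fieldOfSubtypeIsMaximal K
  set σ := IsArtinianRing.equivPi K with hσdef
  have hσ : σ z ≠ (0 : ∀ I : MaximalSpectrum K, K ⧸ I.asIdeal) :=
    fun h => h0 (by simpa using σ.injective (h.trans (map_zero σ).symm))
  obtain ⟨i, hi⟩ := Function.ne_iff.mp hσ
  have hi : σ z i ≠ 0 := hi
  classical
  set w : ∀ I : MaximalSpectrum K, K ⧸ I.asIdeal :=
    Function.update (0 : ∀ I : MaximalSpectrum K, K ⧸ I.asIdeal) i (σ z i)⁻¹ with hw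
  set y := σ.symm w with hy
  have hkey : σ (z * y) = Function.update
      (0 : ∀ I : MaximalSpectrum K, K ⧸ I.asIdeal) i 1 := by
    rw [map_mul, hy, σ.apply_symm_apply]
    funext j
    by_cases hj : j = i
    · subst hj
      simp only [Pi.mul_apply, hw, Function.update_self]
      exact mul_inv_cancel₀ hi
    · simp [hw, Function.update_of_ne hj]
  have hzy : IsIdempotentElem (z * y) := by
    unfold IsIdempotentElem
    apply σ.injective
    rw [map_mul, hkey]
    funext j
    by_cases hj : j = i
    · subst hj; simp
    · simp [Function.update_of_ne hj]
  have hzy0 : z * y ≠ 0 := by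
    intro h
    have h2 : σ (z * y) i = Function.update
        (0 : ∀ I : MaximalSpectrum K, K ⧸ I.asIdeal) i 1 i := by rw [hkey]
    rw [h, map_zero] at h2
    simp at h2
  exact trace_idem_ne_zero hzy hzy0 (hz y)

variable (R : Subalgebra ℤ K)

lemma lattice_basis (hR : IsZOrder K R) {I : Submodule R K} (hI : IsFracIdeal R I) :
    ∃ (n : ℕ) (b : Basis (Fin n) ℚ K),
      I.restrictScalars ℤ = Submodule.span ℤ (Set.range ⇑b) := by
  classical
  obtain ⟨hfree, hrank⟩ := hR
  let c := Module.Free.chooseBasis ℤ R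
  have hci : LinearIndependent ℤ (fun i => (c i : K)) :=
    c.linearIndependent.map' (Submodule.subtype R.toSubmodule) (Submodule.ker_subtype _)
  have hcq : LinearIndependent ℚ (fun i => (c i : K)) :=
    (LinearIndependent.iff_fractionRing ℤ ℚ).mp hci
  have hfinidx : Finite (Module.Free.ChooseBasisIndex ℤ R) := hcq.finite
  have hRfin : Module.Finite ℤ R := Module.Finite.of_basis c
  have hIfinR : Module.Finite R I := Module.Finite.iff_fg.mpr hI.1
  have hIfin : Module.Finite ℤ I := Module.Finite.trans (R := ℤ) ↥R ↥I
  set J := I.restrictScalars ℤ with hJ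
  have hJfin : Module.Finite ℤ J := hIfin
  obtain ⟨x, hxI, hxnzd⟩ := hI.2
  have hspanR : Submodule.span ℚ (R : Set K) = ⊤ := by
    have hcard : Fintype.card (Module.Free.ChooseBasisIndex ℤ R) = finrank ℚ K := by
      rw [← hrank, finrank_eq_card_chooseBasisIndex]
    have htop := hcq.span_eq_top_of_card_eq_finrank' hcard
    refine le_antisymm le_top ?_
    rw [← htop]
    apply Submodule.span_mono
    rintro _ ⟨i, rfl⟩
    exact (c i).2
  have hinj : Function.Injective (LinearMap.mulLeft ℚ x) := by
    intro a b hab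
    simp only [LinearMap.mulLeft_apply] at hab
    have h1 : (a - b) * x = 0 := by rw [sub_mul, mul_comm a x, mul_comm b x]; rw [hab]; ring
    exact sub_eq_zero.mp (mem_nonZeroDivisors_iff_right.mp hxnzd _ h1)
  have hsurj : Function.Surjective (LinearMap.mulLeft ℚ x) :=
    LinearMap.injective_iff_surjective.mp hinj
  have hspanI : Submodule.span ℚ (I : Set K) = ⊤ := by
    refine le_antisymm le_top ?_
    intro z _
    obtain ⟨v, hv⟩ := hsurj z
    simp only [LinearMap.mulLeft_apply] at hv
    have hvmem : v ∈ Submodule.span ℚ (R : Set K) := hspanR ▸ Submodule.mem_top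
    have hzmem : z ∈ Submodule.map (LinearMap.mulLeft ℚ x) (Submodule.span ℚ (R : Set K)) :=
      ⟨v, hvmem, hv⟩
    rw [Submodule.map_span] at hzmem
    refine Submodule.span_le.mpr ?_ hzmem
    rintro _ ⟨r, hr, rfl⟩
    simp only [LinearMap.mulLeft_apply, SetLike.mem_coe]
    have hmem : (⟨r, hr⟩ : R) • x ∈ I := I.smul_mem _ hxI
    have hsm : (⟨r, hr⟩ : R) • x = r * x := rfl
    rw [hsm] at hmem
    rw [mul_comm]
    exact Submodule.subset_span hmem
  have hJfree : Module.Free ℤ ↥J := by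
    haveI : IsAddTorsionFree K := .of_module_rat K; exact Module.free_of_finite_type_torsion_free'
  let d := Module.Free.chooseBasis ℤ ↥J
  set b : Module.Free.ChooseBasisIndex ℤ ↥J → K := fun i => (d i : K) with hb
  have hdi : LinearIndependent ℤ b :=
    d.linearIndependent.map' J.subtype (Submodule.ker_subtype _)
  have hdq : LinearIndependent ℚ b := (LinearIndependent.iff_fractionRing ℤ ℚ).mp hdi
  have hspanJ : Submodule.span ℤ (Set.range b) = J := by
    conv_rhs => rw [← Submodule.map_subtype_top J]
    rw [← d.span_eq, Submodule.map_span]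
    congr 1
    rw [← Set.range_comp]
    rfl
  have hspanQ : ⊤ ≤ Submodule.span ℚ (Set.range b) := by
    rw [← hspanI]
    refine Submodule.span_le.mpr ?_
    intro z hz
    have hzJ : z ∈ J := hz
    rw [← hspanJ] at hzJ
    exact Submodule.span_le_restrictScalars ℤ ℚ (Set.range b) hzJ
  let bQ := Basis.mk hdq hspanQ
  have : Fintype (Module.Free.ChooseBasisIndex ℤ ↥J) := Fintype.ofFinite _
  refine ⟨Fintype.card (Module.Free.ChooseBasisIndex ℤ ↥J),
    bQ.reindex (Fintype.equivFin _), ?_⟩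
  rw [Basis.range_reindex]
  rw [show Set.range ⇑bQ = Set.range b from by rw [Basis.coe_mk], hspanJ]

lemma traceDual_restrict (I : Submodule R K) :
    (traceDual R I).restrictScalars ℤ
      = (Algebra.traceForm ℚ K).dualSubmodule (I.restrictScalars ℤ) := by
  ext z
  constructor
  · intro h y hy
    obtain ⟨n, hn⟩ := h y hy
    exact Submodule.mem_one.mpr ⟨n, by simpa [Algebra.traceForm_apply] using hn.symm⟩
  · intro h y hy
    obtain ⟨n, hn⟩ := Submodule.mem_one.mp (h y hy)
    exact ⟨n, by simpa [Algebra.traceForm_apply] using hn.symm⟩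

lemma traceForm_flip :
    (Algebra.traceForm ℚ K).flip = Algebra.traceForm ℚ K := by
  ext x y
  simp [Algebra.traceForm_apply, mul_comm]

end Aux

/-- The trace dual of a fractional `R`-ideal is a fractional `R`-ideal with the same
multiplicator ring. -/
theorem stmt3 {K : Type*} [CommRing K] [Algebra ℚ K] [FiniteDimensional ℚ K] [IsReduced K]
    (R : Subalgebra ℤ K) (hR : IsZOrder K R) (I : Submodule R K) (hI : IsFracIdeal R I) :
    IsFracIdeal R (traceDual R I) ∧ multSet R (traceDual R I) = multSet R I := by
  classical
  obtain ⟨n, bQ, hJ⟩ := lattice_basis R hR hI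
  set B := Algebra.traceForm ℚ K with hBdef
  have hB : B.Nondegenerate := traceForm_nondeg
  have hdual : (traceDual R I).restrictScalars ℤ = B.dualSubmodule (I.restrictScalars ℤ) :=
    traceDual_restrict R I
  have hspan : (traceDual R I).restrictScalars ℤ
      = Submodule.span ℤ (Set.range ⇑(B.dualBasis hB bQ)) := by
    rw [hdual, hJ, LinearMap.BilinForm.dualSubmodule_span_of_basis _ hB]
  have fwd : ∀ (I' : Submodule R K), multSet R I' ⊆ multSet R (traceDual R I') := by
    intro I' x hx z hz y hy
    have h1 : (x * z) * y = z * (x * y) := by ring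
    rw [h1]
    exact hz _ (hx y hy)
  refine ⟨⟨?_, ?_⟩, ?_⟩
  · -- FG
    have h1 : traceDual R I = Submodule.span R (Set.range ⇑(B.dualBasis hB bQ)) := by
      apply le_antisymm
      · intro z hz
        have hz' : z ∈ Submodule.span ℤ (Set.range ⇑(B.dualBasis hB bQ)) := by
          rw [← hspan]; exact hz
        exact Submodule.span_le_restrictScalars ℤ R (Set.range ⇑(B.dualBasis hB bQ)) hz'
      · rw [Submodule.span_le]
        rintro _ ⟨i, rfl⟩
        have hmem : B.dualBasis hB bQ i ∈ Submodule.span ℤ (Set.range ⇑(B.dualBasis hB bQ)) :=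
          Submodule.subset_span ⟨i, rfl⟩
        rw [← hspan] at hmem
        exact hmem
    rw [h1]
    exact Submodule.fg_span (Set.finite_range _)
  · -- nonzerodivisor
    have h1span : (1 : K) ∈ Submodule.span ℚ (Set.range ⇑(B.dualBasis hB bQ)) := by
      rw [(B.dualBasis hB bQ).span_eq]; trivial
    obtain ⟨m, hm, hmem⟩ := exists_int_smul_mem_span h1span
    refine ⟨m • (1 : K), ?_, ?_⟩
    · have : m • (1 : K) ∈ (traceDual R I).restrictScalars ℤ := by rw [hspan]; exact hmem
      exact this
    · have heq : m • (1 : K) = algebraMap ℚ K (m : ℚ) := by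
        rw [map_intCast]
        simp
      rw [heq]
      have : IsUnit ((m : ℚ)) := (Int.cast_ne_zero.mpr hm).isUnit
      exact (this.map (algebraMap ℚ K)).mem_nonZeroDivisors
  · -- multSet equality
    have hdd : traceDual R (traceDual R I) = I := by
      apply Submodule.restrictScalars_injective ℤ ↥R K
      rw [traceDual_restrict, hdual, hJ]
      have hflip := LinearMap.BilinForm.dualSubmodule_dualSubmodule_flip_of_basis (R := ℤ) B hB bQ
      have hflipB : B.flip = B := traceForm_flip
      rw [hflipB] at hflip
      exact hflip
    apply Set.Subset.antisymm
    · intro x hx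
      have hx2 := fwd (traceDual R I) hx
      rw [hdd] at hx2
      exact hx2
    · exact fwd I
end

section
/- Let R be an order in an étale ℚ-algebra K and I a fractional R-ideal with multiplicator ring S = (I : I). Then I decomposes as a direct sum I = I₁ ⊕ I₂ of two nonzero R-submodules which are ideals in complementary factors of K if and only if S decomposes as a product of two rings S = S₁ × S₂. Concretely: if S = S₁ × S₂ with identity elements e₁, e₂, then I = e₁I ⊕ e₂I; conversely, if I = I₁ ⊕ I₂ with I₁I₂ = 0, then (I : I) = (I₁ : I₁) ⊕ (I₂ : I₂). -/
/-- The multiplicator ring `(I : I) = {x ∈ K : xI ⊆ I}`, as a subring of `K`. -/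
def multRing {K : Type*} [CommRing K] [Algebra ℚ K] (R : Subalgebra ℤ K)
    (I : Submodule R K) : Subalgebra ℤ K where
  carrier := {x | ∀ y ∈ I, x * y ∈ I}
  mul_mem' := by
    intro a b ha hb y hy
    rw [mul_assoc]; exact ha _ (hb y hy)
  one_mem' := by intro y hy; rw [one_mul]; exact hy
  add_mem' := by
    intro a b ha hb y hy
    rw [add_mul]; exact I.add_mem (ha y hy) (hb y hy)
  zero_mem' := by intro y hy; rw [zero_mul]; exact I.zero_mem
  algebraMap_mem' := by
    intro n y hy
    have : (algebraMap ℤ K n) * y = n • y := by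
      rw [algebraMap_int_eq, eq_intCast, zsmul_eq_mul]
    rw [this]
    exact zsmul_mem hy n


/-- `I` decomposes as a direct sum of two nonzero ideals living in complementary factors
of `K` if and only if its multiplicator ring `S = (I : I)` decomposes as a product of two
rings, i.e. contains a nontrivial idempotent. -/
theorem stmt6 {K : Type*} [CommRing K] [Algebra ℚ K] [FiniteDimensional ℚ K] [IsReduced K]
    (R : Subalgebra ℤ K) (hR : IsZOrder K R) (I : Submodule R K) (hI : IsFracIdeal R I) :
    (∃ e ∈ multRing R I, e ≠ 0 ∧ e ≠ 1 ∧ e * e = e) ↔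
      (∃ I₁ I₂ : Submodule R K, I₁ ≠ ⊥ ∧ I₂ ≠ ⊥ ∧ I₁ ⊓ I₂ = ⊥ ∧ I₁ ⊔ I₂ = I ∧
        ∀ x ∈ I₁, ∀ y ∈ I₂, x * y = 0) := by

  obtain ⟨hfg, x₀, hx₀I, hx₀⟩ := hI
  constructor
  · rintro ⟨e, he, he0, he1, hee⟩
    have he' : ∀ y ∈ I, e * y ∈ I := he
    have he1e : e * (1 - e) = 0 := by rw [mul_sub, mul_one, hee, sub_self]
    refine ⟨Submodule.map (LinearMap.mul R K e) I,
      Submodule.map (LinearMap.mul R K (1 - e)) I, ?_, ?_, ?_, ?_, ?_⟩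
    · rw [Submodule.ne_bot_iff]
      refine ⟨e * x₀, Submodule.mem_map_of_mem hx₀I, fun h => he0 ?_⟩
      exact hx₀.2 e h
    · rw [Submodule.ne_bot_iff]
      refine ⟨(1 - e) * x₀, Submodule.mem_map_of_mem hx₀I, fun h => he1 ?_⟩
      have h0 : (1 : K) - e = 0 := hx₀.2 (1 - e) h
      exact (sub_eq_zero.mp h0).symm
    · rw [eq_bot_iff]
      intro z hz
      rw [Submodule.mem_inf] at hz
      obtain ⟨hz1, hz2⟩ := hz
      obtain ⟨x, hx, rfl⟩ := hz1
      obtain ⟨y, hy, hyx⟩ := hz2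
      simp only [LinearMap.mul_apply'] at hyx ⊢
      rw [Submodule.mem_bot]
      calc e * x = e * (e * x) := by rw [← mul_assoc, hee]
        _ = e * ((1 - e) * y) := by rw [hyx]
        _ = 0 := by rw [← mul_assoc, he1e, zero_mul]
    · apply le_antisymm
      · refine sup_le ?_ ?_
        · rintro z ⟨x, hx, rfl⟩
          exact he' x hx
        · rintro z ⟨x, hx, rfl⟩
          show (1 - e) * x ∈ I
          rw [sub_mul, one_mul]
          exact I.sub_mem hx (he' x hx)
      · intro z hz
        rw [Submodule.mem_sup]
        refine ⟨e * z, Submodule.mem_map_of_mem hz, (1 - e) * z,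
          Submodule.mem_map_of_mem hz, by ring⟩
    · rintro x ⟨a, ha, rfl⟩ y ⟨b, hb, rfl⟩
      show (e * a) * ((1 - e) * b) = 0
      calc (e * a) * ((1 - e) * b) = (e * (1 - e)) * (a * b) := by ring
        _ = 0 := by rw [he1e, zero_mul]
  · rintro ⟨I₁, I₂, h1, h2, hinf, hsup, hmul⟩
    have hI₁ : I₁ ≤ I := hsup ▸ le_sup_left
    have hx₀' : x₀ ∈ I₁ ⊔ I₂ := hsup ▸ hx₀I
    obtain ⟨x₁, hx₁, x₂, hx₂, hsum⟩ := Submodule.mem_sup.mp hx₀'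
    -- x₀ is a unit in K
    have hinj : Function.Injective (LinearMap.mulLeft ℚ x₀) := by
      intro a b hab
      have : (a - b) * x₀ = 0 := by
        simp only [LinearMap.mulLeft_apply] at hab
        linear_combination hab
      exact sub_eq_zero.mp (hx₀.2 _ this)
    have hsurj : Function.Surjective (LinearMap.mulLeft ℚ x₀) :=
      LinearMap.surjective_of_injective hinj
    obtain ⟨u, hu⟩ := hsurj 1
    have hu : x₀ * u = 1 := hu
    have h12 : x₁ * x₂ = 0 := hmul x₁ hx₁ x₂ hx₂
    set e := x₁ * u with hedef
    have hee : e * e = e := by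
      have hx₁sq : x₁ * x₁ = x₁ * x₀ := by
        linear_combination x₁ * hsum - h12
      calc e * e = (x₁ * x₁) * (u * u) := by ring
        _ = (x₁ * x₀) * (u * u) := by rw [hx₁sq]
        _ = x₁ * u * (x₀ * u) := by ring
        _ = e := by rw [hu, mul_one]
    have key : ∀ y₁ ∈ I₁, e * y₁ = y₁ := by
      intro y₁ hy₁
      have h2y : y₁ * x₂ = 0 := hmul y₁ hy₁ x₂ hx₂
      have : x₁ * y₁ = x₀ * y₁ := by
        rw [← hsum]; linear_combination -h2y
      calc e * y₁ = (x₁ * y₁) * u := by ring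
        _ = (x₀ * y₁) * u := by rw [this]
        _ = (x₀ * u) * y₁ := by ring
        _ = y₁ := by rw [hu, one_mul]
    have key2 : ∀ y₂ ∈ I₂, e * y₂ = 0 := by
      intro y₂ hy₂
      have h1y : x₁ * y₂ = 0 := hmul x₁ hx₁ y₂ hy₂
      calc e * y₂ = (x₁ * y₂) * u := by ring
        _ = 0 := by rw [h1y, zero_mul]
    refine ⟨e, ?_, ?_, ?_, hee⟩
    · show ∀ y ∈ I, e * y ∈ I
      intro y hy
      have hy' : y ∈ I₁ ⊔ I₂ := hsup ▸ hy
      obtain ⟨y₁, hy₁, y₂, hy₂, rfl⟩ := Submodule.mem_sup.mp hy'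
      have : e * (y₁ + y₂) = y₁ := by
        rw [mul_add, key y₁ hy₁, key2 y₂ hy₂, add_zero]
      rw [this]
      exact hI₁ hy₁
    · intro he0
      apply h1
      rw [eq_bot_iff]
      intro y hy
      rw [Submodule.mem_bot]
      have := key y hy
      rw [he0, zero_mul] at this
      exact this.symm
    · intro he1
      apply h2
      rw [eq_bot_iff]
      intro y hy
      rw [Submodule.mem_bot]
      have := key2 y hy
      rw [he1, one_mul] at this
      exact this
end

section
/- Let K be a CM-algebra with complex conjugation and S an order in K stable under conjugation. Then the quotient group S^× / ⟨v·v̄ : v ∈ S^×⟩ is finite. -/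
set_option linter.unusedSectionVars false
set_option maxSynthPendingDepth 2

open NumberField

/-- `Additive` of a product of commutative groups. -/
def piAdditive {ι : Type*} (G : ι → Type*) [∀ i, CommGroup (G i)] :
    Additive (∀ i, G i) ≃+ ∀ i, Additive (G i) where
  toFun := fun a i => Additive.ofMul (Additive.toMul a i)
  invFun := fun a => Additive.ofMul (fun i => Additive.toMul (a i))
  left_inv := fun _ => rfl
  right_inv := fun _ => rfl
  map_add' := fun _ _ => rfl

section Aux

theorem ratFinite_congr {M : Type*} [AddCommGroup M] {m1 m2 : Module ℚ M}
    (h : @Module.Finite ℚ M _ _ m1) : @Module.Finite ℚ M _ _ m2 := by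
  cases Subsingleton.elim m1 m2; exact h

variable {K : Type*} [CommRing K] [Algebra ℚ K] [FiniteDimensional ℚ K] [IsReduced K]

noncomputable def auxField (i : {I : Ideal K | I.IsMaximal}) : Field (K ⧸ i.1) :=
  IsArtinianRing.fieldOfSubtypeIsMaximal K ⟨i.1, i.2⟩

theorem auxNF (i : {I : Ideal K | I.IsMaximal}) :
    letI := auxField i; NumberField (K ⧸ i.1) := by
  letI := auxField i
  have hfd : FiniteDimensional ℚ (K ⧸ i.1) :=
    Module.Finite.of_surjective (Ideal.Quotient.mkₐ ℚ i.1).toLinearMap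
      (Ideal.Quotient.mkₐ_surjective ℚ i.1)
  haveI hcz : CharZero (K ⧸ i.1) := charZero_of_injective_algebraMap (algebraMap ℚ (K ⧸ i.1)).injective
  exact { to_charZero := by convert hcz; rfl, to_finiteDimensional := ratFinite_congr hfd }

theorem auxArtinian' : IsArtinianRing K := isArtinian_of_tower ℚ inferInstance

/-- Kronecker's theorem for étale ℚ-algebras. -/
theorem aux_pow_eq_one {x : K} (hx : IsIntegral ℤ x) (hnorm : ∀ φ : K →+* ℂ, ‖φ x‖ = 1) :
    ∃ m : ℕ, 0 < m ∧ x ^ m = 1 := by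
  haveI := auxArtinian' (K := K)
  haveI : Finite {I : Ideal K | I.IsMaximal} := (IsArtinianRing.setOfPred_isMaximal_finite K).to_subtype
  cases nonempty_fintype {I : Ideal K | I.IsMaximal}
  set p : ∀ i : {I : Ideal K | I.IsMaximal}, K →+* K ⧸ i.1 :=
    fun i => (Pi.evalRingHom _ (⟨i.1, i.2⟩ : MaximalSpectrum K)).comp (IsArtinianRing.equivPi K).toRingHom with hp
  have key : ∀ i : {I : Ideal K | I.IsMaximal}, ∃ n : ℕ, 0 < n ∧ (p i x) ^ n = 1 := by
    intro i
    have hxi := hx.map (p i).toIntAlgHom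
    letI := auxField i
    haveI := auxNF i
    obtain ⟨n, hn, h⟩ := NumberField.Embeddings.pow_eq_one_of_norm_eq_one (K ⧸ i.1) ℂ
      hxi
      (fun ψ => hnorm (ψ.comp (p i)))
    exact ⟨n, hn, h⟩
  choose n hn hpow using key
  refine ⟨∏ i, n i, Finset.prod_pos (fun i _ => hn i), ?_⟩
  apply (IsArtinianRing.equivPi K).injective
  rw [map_pow, map_one]
  funext i
  obtain ⟨c, hc⟩ := Finset.dvd_prod_of_mem n (Finset.mem_univ (⟨i.asIdeal, i.isMaximal⟩ : {I : Ideal K | I.IsMaximal}))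
  have : (IsArtinianRing.equivPi K) x i = p ⟨i.asIdeal, i.isMaximal⟩ x := rfl
  rw [Pi.pow_apply, Pi.one_apply, this, hc, pow_mul, hpow ⟨i.asIdeal, i.isMaximal⟩, one_pow]

theorem aux_fg (S : Subalgebra ℤ K) [Module.Finite ℤ S] : Monoid.FG (↥S)ˣ := by
  haveI := auxArtinian' (K := K)
  haveI : Finite {I : Ideal K | I.IsMaximal} := (IsArtinianRing.setOfPred_isMaximal_finite K).to_subtype
  haveI : Algebra.IsIntegral ℤ ↥S := Algebra.IsIntegral.of_finite ℤ ↥S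
  letI fi : ∀ i : {I : Ideal K | I.IsMaximal}, Field (K ⧸ i.1) := fun i =>
    IsArtinianRing.fieldOfSubtypeIsMaximal K ⟨i.1, i.2⟩
  haveI nf : ∀ i : {I : Ideal K | I.IsMaximal}, NumberField (K ⧸ i.1) := fun i => auxNF i
  set p : ∀ i : {I : Ideal K | I.IsMaximal}, K →+* K ⧸ i.1 :=
    fun i => (Pi.evalRingHom _ (⟨i.1, i.2⟩ : MaximalSpectrum K)).comp (IsArtinianRing.equivPi K).toRingHom with hp
  have hint : ∀ (i : {I : Ideal K | I.IsMaximal}) (u : (↥S)ˣ),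
      IsIntegral ℤ (p i (((u : ↥S) : K))) := fun i u =>
    ((Algebra.IsIntegral.isIntegral (R := ℤ) ((u : (↥S)ˣ) : ↥S)).map S.val).map (p i).toIntAlgHom
  let F : ∀ i : {I : Ideal K | I.IsMaximal}, (↥S)ˣ →* 𝓞 (K ⧸ i.1) := fun i =>
    RingOfIntegers.restrict_monoidHom
      (((p i).comp S.val.toRingHom).toMonoidHom.comp (Units.coeHom ↥S)) (hint i)
  let G : (↥S)ˣ →* ∀ i : {I : Ideal K | I.IsMaximal}, (𝓞 (K ⧸ i.1))ˣ :=
    Pi.monoidHom (fun i => (F i).toHomUnits)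
  have hG : Function.Injective G := by
    intro u v huv
    have h2 : ((u : ↥S) : K) = ((v : ↥S) : K) := by
      apply (IsArtinianRing.equivPi K).injective
      funext i
      have h1 := congrArg (fun w => ((w ⟨i.asIdeal, i.isMaximal⟩ : 𝓞 (K ⧸ (⟨i.asIdeal, i.isMaximal⟩ : {I : Ideal K | I.IsMaximal}).1)) : K ⧸ i.asIdeal)) huv
      exact h1
    exact Units.ext (Subtype.ext h2)
  haveI : ∀ i : {I : Ideal K | I.IsMaximal}, Module.Finite ℤ (Additive (𝓞 (K ⧸ i.1))ˣ) :=
    fun i => inferInstance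
  haveI : Module.Finite ℤ (∀ i : {I : Ideal K | I.IsMaximal}, Additive (𝓞 (K ⧸ i.1))ˣ) :=
    Module.Finite.pi
  haveI : Module.Finite ℤ (Additive (∀ i : {I : Ideal K | I.IsMaximal}, (𝓞 (K ⧸ i.1))ˣ)) :=
    Module.Finite.equiv (piAdditive _).toIntLinearEquiv.symm
  let L := (MonoidHom.toAdditive G).toIntLinearMap
  have hL : Function.Injective L := hG
  haveI : Module.Finite ℤ (LinearMap.range L) := Module.Finite.iff_fg.mpr (IsNoetherian.noetherian _)
  haveI : Module.Finite ℤ (Additive (↥S)ˣ) :=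
    Module.Finite.equiv (LinearEquiv.ofInjective L hL).symm
  rw [Monoid.fg_iff_add_fg, ← AddGroup.fg_iff_addMonoid_fg, ← Module.Finite.iff_addGroup_fg]
  infer_instance

end Aux

/-- For a conjugation-stable order `S` in a CM-algebra `K`, the quotient of the unit
group `S^×` by the subgroup generated by the norms `v·v̄` is finite. -/
theorem stmt8 {K : Type*} [CommRing K] [Algebra ℚ K] [FiniteDimensional ℚ K] [IsReduced K]
    (σ : K ≃ₐ[ℚ] K) (hinv : ∀ x, σ (σ x) = x)
    (hconj : ∀ φ : K →+* ℂ, ∀ x, φ (σ x) = starRingEnd ℂ (φ x))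
    (S : Subalgebra ℤ K) (hS : IsZOrder K S) (hstable : ∀ x ∈ S, σ x ∈ S)
    (N : Subgroup (↥S)ˣ)
    (hN : N = Subgroup.closure
      {w : (↥S)ˣ | ∃ v : (↥S)ˣ, ((w : ↥S) : K) = ((v : ↥S) : K) * σ ((v : ↥S) : K)}) :
    Finite ((↥S)ˣ ⧸ N) := by
  rcases subsingleton_or_nontrivial K with h | h
  · haveI : Subsingleton ↥S := ⟨fun a b => Subtype.ext (Subsingleton.elim _ _)⟩
    haveI : Subsingleton (↥S)ˣ := ⟨fun a b => Units.ext (Subsingleton.elim _ _)⟩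
    exact Quotient.finite _
  haveI : Module.Free ℤ ↥S := hS.1
  haveI : Module.Finite ℤ ↥S :=
    Module.finite_of_finrank_pos (by rw [hS.2]; exact Module.finrank_pos)
  haveI : Algebra.IsIntegral ℤ ↥S := Algebra.IsIntegral.of_finite ℤ ↥S
  haveI : Group.FG (↥S)ˣ := Group.fg_iff_monoid_fg.mpr (aux_fg S)
  apply CommGroup.finite_of_fg_torsion
  intro q
  obtain ⟨u, rfl⟩ := QuotientGroup.mk'_surjective N q
  let σS : ↥S →+* ↥S :=
    { toFun := fun x => ⟨σ x, hstable x x.2⟩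
      map_one' := by ext; simp
      map_mul' := fun a b => by ext; simp
      map_zero' := by ext; simp
      map_add' := fun a b => by ext; simp }
  let v : (↥S)ˣ := Units.map σS.toMonoidHom u
  have hmem : u * v ∈ N := by
    rw [hN]
    apply Subgroup.subset_closure
    refine ⟨u, ?_⟩
    show ((((u : ↥S) * (v : ↥S)) : ↥S) : K) = _
    simp [v, σS]
  let w : (↥S)ˣ := u * v⁻¹
  have hwint : IsIntegral ℤ (((w : ↥S) : K)) :=
    (Algebra.IsIntegral.isIntegral (R := ℤ) (w : ↥S)).map S.val
  have hcoe : ((w : ↥S) : K) = ((u : ↥S) : K) * σ (((u⁻¹ : (↥S)ˣ) : ↥S) : K) := by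
    have : (v⁻¹ : (↥S)ˣ) = Units.map σS.toMonoidHom u⁻¹ := by
      rw [← map_inv]
    show ((((u : ↥S) * (v⁻¹ : (↥S)ˣ) : ↥S)) : K) = _
    rw [this]
    simp [σS]
  have hwnorm : ∀ φ : K →+* ℂ, ‖φ ((w : ↥S) : K)‖ = 1 := by
    intro φ
    have h2 : φ (((u : ↥S) : K)) * φ ((((u⁻¹ : (↥S)ˣ) : ↥S) : K)) = 1 := by
      rw [← map_mul]
      have : (((u : ↥S) : K)) * ((((u⁻¹ : (↥S)ˣ) : ↥S) : K)) = 1 := by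
        rw [← MulMemClass.coe_mul]
        norm_cast
        rw [mul_inv_cancel]
        simp
      rw [this, map_one]
    rw [hcoe, map_mul, hconj φ, norm_mul, RCLike.norm_conj]
    rw [← norm_mul, h2, norm_one]
  obtain ⟨m, hm, hpow⟩ := aux_pow_eq_one hwint hwnorm
  have hw : w ^ m = 1 := by
    apply Units.ext
    apply Subtype.ext
    rw [Units.val_pow_eq_pow_val, SubmonoidClass.coe_pow, hpow]
    simp
  have hu2 : u ^ 2 = (u * v) * w := by
    have := mul_mul_mul_comm u v u v⁻¹
    rw [mul_inv_cancel, mul_one] at this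
    rw [sq]
    exact this.symm
  rw [isOfFinOrder_iff_pow_eq_one]
  refine ⟨2 * m, by positivity, ?_⟩
  have : (QuotientGroup.mk' N) u ^ (2 * m) = (QuotientGroup.mk' N) ((u * v) ^ m * w ^ m) := by
    rw [← map_pow, pow_mul, hu2, mul_pow]
  rw [this, hw, mul_one, map_pow]
  have h1 : (QuotientGroup.mk' N) (u * v) = 1 := (QuotientGroup.eq_one_iff _).mpr hmem
  rw [h1, one_pow]
end

section
/- Let K be a CM-algebra with complex conjugation, S an order in K with S̄ = S, and a, a' ∈ K^× two non-zero-divisors. There exists v ∈ S^× with a = v̄·a'·v and a = a' if and only if v·v̄ = 1, which holds if and only if v is a torsion element of S^×. -/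
section Aux

/-- A complex `n`-th root of unity has norm `1`. -/
lemma aux_norm_one {n : ℕ} (hn : 0 < n) (z : ℂ) (h : z ^ n = 1) : ‖z‖ = 1 := by
  have h2 : ‖z‖₊ ^ n = 1 := by rw [← nnnorm_pow, h, nnnorm_one]
  have h3 := (pow_eq_one_iff_of_nonneg (a := ‖z‖₊) zero_le hn.ne').mp h2
  calc ‖z‖ = (‖z‖₊ : ℝ) := (coe_nnnorm _).symm
  _ = 1 := by rw [h3]; norm_num

/-- A complex number of norm `1` times its conjugate is `1`. -/
lemma aux_mul_conj (z : ℂ) (h : ‖z‖ = 1) : z * (starRingEnd ℂ) z = 1 := by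
  rw [Complex.mul_conj, Complex.normSq_eq_norm_sq, h]
  norm_num

variable {K : Type*} [CommRing K] [Algebra ℚ K] [FiniteDimensional ℚ K] [IsReduced K]

/-- In a reduced finite-dimensional `ℚ`-algebra, if all ring homs to `ℂ` send `x` to `1`,
then `x = 1`. -/
lemma aux_sep (x : K) (h : ∀ φ : K →+* ℂ, φ x = 1) : x = 1 := by
  haveI : IsArtinianRing K := IsArtinianRing.of_finite ℚ K
  have hprime : ∀ J : Ideal K, J.IsPrime → x - 1 ∈ J := by
    intro J hJ
    haveI hmax : J.IsMaximal := (IsArtinianRing.isPrime_iff_isMaximal J).mp hJ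
    letI : Field (K ⧸ J) := Ideal.Quotient.field J
    haveI hfd : FiniteDimensional ℚ (K ⧸ J) :=
      Module.Finite.of_surjective (Ideal.Quotient.mkₐ ℚ J).toLinearMap
        Ideal.Quotient.mk_surjective
    haveI : NoZeroSMulDivisors ℚ (K ⧸ J) :=
      inferInstance
    haveI : Algebra.IsAlgebraic ℚ (K ⧸ J) := Algebra.IsAlgebraic.of_finite ℚ _
    let ψ : (K ⧸ J) →ₐ[ℚ] ℂ := IsAlgClosed.lift
    have h1 : ψ.toRingHom.comp (Ideal.Quotient.mk J) x = 1 := h _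
    have h2 : (Ideal.Quotient.mk J) x = 1 := by
      apply ψ.toRingHom.injective
      simpa using h1
    rwa [← map_one (Ideal.Quotient.mk J), Ideal.Quotient.eq] at h2
  have hnil : IsNilpotent (x - 1) := nilpotent_iff_mem_prime.mpr hprime
  have := hnil.eq_zero
  linear_combination this

end Aux

/-- For a conjugation-stable order `S` in a CM-algebra `K`, a unit `v ∈ S^× and a
non-zero-divisor `a ∈ K`: `a = v̄·a·v` iff `v·v̄ = 1`, iff `v` is a torsion unit. -/
theorem stmt13 {K : Type*} [CommRing K] [Algebra ℚ K] [FiniteDimensional ℚ K] [IsReduced K]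
    (σ : K ≃ₐ[ℚ] K) (hinv : ∀ x, σ (σ x) = x)
    (hconj : ∀ φ : K →+* ℂ, ∀ x, φ (σ x) = starRingEnd ℂ (φ x))
    (S : Subalgebra ℤ K) (hS : IsZOrder K S) (hstable : ∀ x ∈ S, σ x ∈ S)
    (v w : K) (hv : v ∈ S) (hw : w ∈ S) (hvw : v * w = 1)
    (a : K) (ha : a ∈ nonZeroDivisors K) :
    (a = σ v * a * v ↔ v * σ v = 1) ∧
      (v * σ v = 1 ↔ ∃ n : ℕ, 0 < n ∧ v ^ n = 1) := by
  -- trivial case of the zero ring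
  by_cases htriv : Subsingleton K
  · exact ⟨⟨fun _ => Subsingleton.elim _ _, fun _ => Subsingleton.elim _ _⟩,
      ⟨fun _ => ⟨1, one_pos, Subsingleton.elim _ _⟩, fun _ => Subsingleton.elim _ _⟩⟩
  haveI : Nontrivial K := not_subsingleton_iff_nontrivial.mp htriv
  -- `v` is integral over `ℤ`
  obtain ⟨hfree, hrank⟩ := hS
  have hKpos : 0 < Module.finrank ℚ K := Module.finrank_pos
  have hfin : Module.Finite ℤ S :=
    Module.finite_of_finrank_pos (by omega : 0 < Module.finrank ℤ S)
  have hFG : (Subalgebra.toSubmodule S).FG := by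
    have h := Module.finite_def.mp hfin
    rw [← Submodule.fg_top]
    exact h
  have hint : IsIntegral ℤ v := IsIntegral.of_mem_of_fg S hFG v hv
  constructor
  · constructor
    · intro h
      have h2 : a * (v * σ v) = a * 1 := by
        rw [mul_one]
        conv_rhs => rw [h]
        ring
      exact (mul_cancel_left_mem_nonZeroDivisors ha).mp h2
    · intro h
      have : σ v * a * v = a * (v * σ v) := by ring
      rw [this, h, mul_one]
  constructor
  · -- `v * σ v = 1` implies `v` is a root of unity
    intro h
    haveI : IsArtinianRing K := IsArtinianRing.of_finite ℚ K
    haveI := (IsArtinianRing.setOfPred_isMaximal_finite K).to_subtype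
    haveI := Fintype.ofFinite {I : Ideal K | I.IsMaximal}
    have key : ∀ I : {I : Ideal K | I.IsMaximal},
        ∃ n : ℕ, 0 < n ∧ (Ideal.Quotient.mk I.1 v) ^ n = 1 := by
      intro I
      haveI hmax : I.1.IsMaximal := I.2
      letI : Field (K ⧸ I.1) := Ideal.Quotient.field I.1
      haveI hfd : FiniteDimensional ℚ (K ⧸ I.1) :=
        Module.Finite.of_surjective (Ideal.Quotient.mkₐ ℚ I.1).toLinearMap
          Ideal.Quotient.mk_surjective
      haveI : CharZero (K ⧸ I.1) :=
        charZero_of_injective_algebraMap (RingHom.injective (algebraMap ℚ (K ⧸ I.1)))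
      haveI : NumberField (K ⧸ I.1) :=
        { to_charZero := inferInstance
          to_finiteDimensional := by
            rw [show (DivisionRing.toRatAlgebra : Algebra ℚ (K ⧸ I.1)) =
              Ideal.Quotient.algebra ℚ from Subsingleton.elim _ _]
            exact hfd }
      have hint' : IsIntegral ℤ (Ideal.Quotient.mk I.1 v) :=
        hint.map (Ideal.Quotient.mkₐ ℤ I.1)
      have hnorm : ∀ ψ : (K ⧸ I.1) →+* ℂ, ‖ψ (Ideal.Quotient.mk I.1 v)‖ = 1 := by
        intro ψ
        set φ : K →+* ℂ := ψ.comp (Ideal.Quotient.mk I.1) with hφ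
        have h1 : φ v * φ (σ v) = 1 := by rw [← map_mul, h, map_one]
        rw [hconj φ v] at h1
        have h2 : Complex.normSq (φ v) = 1 := by
          have := Complex.mul_conj (φ v)
          rw [h1] at this
          exact_mod_cast this.symm
        have h3 : ‖φ v‖ ^ 2 = 1 := by
          rw [Complex.sq_norm, h2]
        have h4 : (0:ℝ) ≤ ‖φ v‖ := norm_nonneg _
        show ‖φ v‖ = 1
        nlinarith
      obtain ⟨n, hn, hvn⟩ := NumberField.Embeddings.pow_eq_one_of_norm_eq_one
        (K ⧸ I.1) ℂ hint' hnorm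
      exact ⟨n, hn, hvn⟩
    choose f hf1 hf2 using key
    refine ⟨∏ I, f I, Finset.prod_pos (fun I _ => hf1 I), ?_⟩
    have hprime : ∀ J : Ideal K, J.IsPrime → v ^ (∏ I, f I) - 1 ∈ J := by
      intro J hJ
      haveI hmax : J.IsMaximal := (IsArtinianRing.isPrime_iff_isMaximal J).mp hJ
      set I : {I : Ideal K | I.IsMaximal} := ⟨J, hmax⟩ with hI
      obtain ⟨c, hc⟩ : f I ∣ ∏ I', f I' := Finset.dvd_prod_of_mem f (Finset.mem_univ I)
      have hone : (Ideal.Quotient.mk J) (v ^ (∏ I', f I')) = 1 := by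
        rw [map_pow, hc, pow_mul, hf2 I, one_pow]
      rwa [← map_one (Ideal.Quotient.mk J), Ideal.Quotient.eq] at hone
    have hnil : IsNilpotent (v ^ (∏ I, f I) - 1) := nilpotent_iff_mem_prime.mpr hprime
    have := hnil.eq_zero
    linear_combination this
  · -- a root of unity satisfies `v * σ v = 1`
    rintro ⟨n, hn, hvn⟩
    apply aux_sep
    intro φ
    have h1 : φ v ^ n = 1 := by rw [← map_pow, hvn, map_one]
    have h3 : ‖φ v‖ = 1 := aux_norm_one hn _ h1
    rw [map_mul, hconj φ v]
    exact aux_mul_conj _ h3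
end

section
/- Let h ∈ ℤ[x] be a monic square-free polynomial of even degree 2g with integer coefficients all of whose complex roots have absolute value √q, factored as h = ∏ᵢ hᵢ with hᵢ irreducible. Then h is ordinary (exactly half of its roots, counted in ℚ̄_p, are p-adic units, where q = p^r) if and only if the middle coefficient of h (the coefficient of x^g) is coprime to p. -/
open Polynomial

/-- Key coefficient identity for Weil polynomials: `a₀ * aᵢ = q^(2g-i) * a_{2g-i}`. -/
private lemma weil_coeff_key (q g : ℕ) (hq0 : 0 < q) (h : Polynomial ℤ)
    (hm : h.Monic) (hdeg : h.natDegree = 2 * g)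
    (habs : ∀ z : ℂ, Polynomial.aeval z h = 0 → ‖z‖ = Real.sqrt q) :
    ∀ i ≤ 2 * g, h.coeff 0 * h.coeff i = (q : ℤ) ^ (2 * g - i) * h.coeff (2 * g - i) := by
  set f : Polynomial ℂ := h.map (Int.castRingHom ℂ) with hfdef
  have hfm : f.Monic := hm.map _
  have hfne : f ≠ 0 := hfm.ne_zero
  have hfdeg : f.natDegree = 2 * g := by
    rw [hfdef, hm.natDegree_map, hdeg]
  have hsplits : f.Splits := IsAlgClosed.splits f
  set s : Multiset ℂ := f.roots with hsdef
  have hcard : Multiset.card s = 2 * g := by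
    rw [hsdef, splits_iff_card_roots.mp hsplits, hfdeg]
  have hprodf : f = (s.map fun a => X - C a).prod :=
    hsplits.eq_prod_roots_of_monic hfm
  have hcoeff : ∀ k, f.coeff k = ((h.coeff k : ℤ) : ℂ) := fun k => by
    rw [hfdef, coeff_map]; rfl
  -- root facts
  have hroot : ∀ α ∈ s, α * (starRingEnd ℂ) α = (q : ℂ) ∧ α ≠ 0 := by
    intro α hα
    have hev : f.eval α = 0 := (mem_roots hfne).mp hα
    have haev : Polynomial.aeval α h = 0 := by
      rw [Polynomial.aeval_def, ← Polynomial.eval_map]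
      exact hev
    have habsα : ‖α‖ = Real.sqrt q := habs α haev
    have hq0' : (0 : ℝ) < Real.sqrt q := Real.sqrt_pos.mpr (by exact_mod_cast hq0)
    have hαne : α ≠ 0 := by
      intro h0
      rw [h0, norm_zero] at habsα
      exact hq0'.ne habsα
    refine ⟨?_, hαne⟩
    have hns : Complex.normSq α = (q : ℝ) := by
      have := Complex.sq_norm α
      rw [habsα, Real.sq_sqrt (by positivity : (0:ℝ) ≤ (q:ℝ))] at this
      exact this.symm
    have := Complex.mul_conj α
    rw [hns] at this
    rw [this]
    push_cast
    ring
  -- conjugation permutes the roots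
  have hmapconj : f.map (starRingEnd ℂ) = f := by
    rw [hfdef, Polynomial.map_map]
    congr 1
    exact Subsingleton.elim _ _
  have hconj : s.map (starRingEnd ℂ) = s := by
    have := hsplits.roots_map (starRingEnd ℂ)
    rw [hmapconj] at this
    rw [hsdef, ← this]
  -- formula for eval of f
  have hevalf : ∀ x : ℂ, f.eval x = (s.map fun a => x - a).prod := by
    intro x
    conv_lhs => rw [hprodf]
    rw [eval_multiset_prod, Multiset.map_map]
    congr 1
    apply Multiset.map_congr rfl
    intro a _
    simp
  have ha0 : f.coeff 0 = (s.map fun a => -a).prod := by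
    rw [coeff_zero_eq_eval_zero, hevalf]
    congr 1
    apply Multiset.map_congr rfl
    intro a _
    ring
  -- a₀ squared = q^(2g)
  have ha0sq : f.coeff 0 * f.coeff 0 = (q : ℂ) ^ (2 * g) := by
    have h2 : (s.map fun a => -((starRingEnd ℂ) a)).prod = f.coeff 0 := by
      have : (s.map fun a => -((starRingEnd ℂ) a)) =
          (s.map (starRingEnd ℂ)).map (fun a => -a) := (Multiset.map_map _ _ _).symm
      rw [this, hconj, ha0]
    calc f.coeff 0 * f.coeff 0
        = (s.map fun a => -a).prod * (s.map fun a => -((starRingEnd ℂ) a)).prod := by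
          nth_rewrite 2 [← h2]
          rw [ha0]
      _ = (s.map fun a => (-a) * (-((starRingEnd ℂ) a))).prod := by
          rw [← Multiset.prod_map_mul]
      _ = (s.map fun _ => (q : ℂ)).prod := by
          congr 1
          apply Multiset.map_congr rfl
          intro a ha
          have := (hroot a ha).1
          rw [neg_mul_neg, this]
      _ = (q : ℂ) ^ (2 * g) := by
          rw [Multiset.map_const', Multiset.prod_replicate, hcard]
  -- the auxiliary polynomial B
  set B : Polynomial ℂ :=
    ∑ j ∈ Finset.range (2 * g + 1), C (f.coeff j * (q : ℂ) ^ j) * X ^ (2 * g - j) with hBdef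
  have hBeval : ∀ x : ℂ, B.eval x =
      ∑ j ∈ Finset.range (2 * g + 1), f.coeff j * (q : ℂ) ^ j * x ^ (2 * g - j) := by
    intro x
    rw [hBdef, eval_finset_sum]
    simp
  -- main functional identity
  have hfun : ∀ x : ℂ, (C (f.coeff 0) * f).eval x = B.eval x := by
    intro x
    rw [eval_mul, eval_C, hBeval]
    by_cases hx : x = 0
    · subst hx
      rw [Finset.sum_eq_single (2 * g)]
      · have hlead : f.coeff (2 * g) = 1 := by
          rw [← hfdeg]; exact hfm.coeff_natDegree
        rw [hlead, Nat.sub_self, pow_zero, mul_one, one_mul,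
          ← coeff_zero_eq_eval_zero, ha0sq]
      · intro j hj hjne
        have : 2 * g - j ≠ 0 := by
          simp only [Finset.mem_range] at hj
          omega
        rw [zero_pow this, mul_zero]
      · intro hmem
        exact absurd (Finset.mem_range.mpr (by omega)) hmem
    · -- x ≠ 0
      have hB : ∑ j ∈ Finset.range (2 * g + 1), f.coeff j * (q : ℂ) ^ j * x ^ (2 * g - j)
          = x ^ (2 * g) * f.eval ((q : ℂ) * x⁻¹) := by
        rw [eval_eq_sum_range, hfdeg, Finset.mul_sum]
        apply Finset.sum_congr rfl
        intro j hj
        simp only [Finset.mem_range] at hj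
        have hjle : j ≤ 2 * g := by omega
        rw [mul_pow, pow_sub₀ x hx hjle, ← inv_pow]
        ring
      rw [hB, hevalf]
      -- LHS: rewrite f.eval x using conjugated roots
      have hfx : f.eval x = (s.map fun a => x - (starRingEnd ℂ) a).prod := by
        rw [hevalf]
        conv_lhs => rw [← hconj, Multiset.map_map]
        rfl
      have hLHS : f.coeff 0 * f.eval x = (s.map fun a => (q : ℂ) - a * x).prod := by
        rw [ha0, hfx, ← Multiset.prod_map_mul]
        congr 1
        apply Multiset.map_congr rfl
        intro a ha
        have h1 := (hroot a ha).1
        have : (-a) * (x - (starRingEnd ℂ) a) = a * (starRingEnd ℂ) a - a * x := by ring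
        rw [this, h1]
      have hRHS : x ^ (2 * g) * (s.map fun a => (q : ℂ) * x⁻¹ - a).prod
          = (s.map fun a => (q : ℂ) - a * x).prod := by
        have hxp : x ^ (2 * g) = (s.map fun _ => x).prod := by
          rw [Multiset.map_const', Multiset.prod_replicate, hcard]
        rw [hxp, ← Multiset.prod_map_mul]
        congr 1
        apply Multiset.map_congr rfl
        intro a _
        field_simp
      rw [hevalf ((q : ℂ) * x⁻¹), hRHS, ← hevalf x]
      exact hLHS
  have hAB : C (f.coeff 0) * f = B := Polynomial.funext hfun
  -- extract coefficients
  intro i hi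
  have hBcoeff : B.coeff i = f.coeff (2 * g - i) * (q : ℂ) ^ (2 * g - i) := by
    rw [hBdef, finset_sum_coeff]
    rw [Finset.sum_eq_single (2 * g - i)]
    · rw [coeff_C_mul, coeff_X_pow, if_pos (by omega), mul_one]
    · intro j hj hjne
      simp only [Finset.mem_range] at hj
      rw [coeff_C_mul, coeff_X_pow, if_neg (by omega), mul_zero]
    · intro hmem
      exact absurd (Finset.mem_range.mpr (by omega)) hmem
  have hcoeffeq : f.coeff 0 * f.coeff i = (q : ℂ) ^ (2 * g - i) * f.coeff (2 * g - i) := by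
    have := congrArg (fun P => Polynomial.coeff P i) hAB
    simp only [coeff_C_mul] at this
    rw [this, hBcoeff]
    ring
  rw [hcoeff, hcoeff, hcoeff] at hcoeffeq
  exact_mod_cast hcoeffeq

/-- A square-free `q`-Weil polynomial `h` of degree `2g` (`q = p^r`) is ordinary (exactly
half of its roots are `p`-adic units; equivalently `h mod p` is not divisible by
`x^{g+1}`) if and only if its middle coefficient is coprime to `p`. -/
theorem stmt18 (p r g : ℕ) (hp : p.Prime) (hr : 0 < r) (hg : 0 < g)
    (q : ℕ) (hq : q = p ^ r) (h : Polynomial ℤ)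
    (hm : h.Monic) (hsf : Squarefree h) (hdeg : h.natDegree = 2 * g)
    (habs : ∀ z : ℂ, Polynomial.aeval z h = 0 → ‖z‖ = Real.sqrt q) :
    ¬ ((Polynomial.X : Polynomial (ZMod p)) ^ (g + 1) ∣ h.map (Int.castRingHom (ZMod p)))
      ↔ IsCoprime (h.coeff g) (p : ℤ) := by
  have hq0 : 0 < q := by rw [hq]; exact pow_pos hp.pos r
  have key := weil_coeff_key q g hq0 h hm hdeg habs
  have hqz : (q : ℤ) ≠ 0 := by exact_mod_cast hq0.ne'
  have hpq : (p : ℤ) ∣ (q : ℤ) := by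
    rw [hq]; push_cast; exact dvd_pow_self _ hr.ne'
  -- a₀ = ± q^g
  have ha0 : h.coeff 0 = (q : ℤ) ^ g ∨ h.coeff 0 = -((q : ℤ) ^ g) := by
    have h0 := key 0 (Nat.zero_le _)
    rw [Nat.sub_zero, show h.coeff (2 * g) = 1 from by
      rw [← hdeg]; exact hm.coeff_natDegree, mul_one] at h0
    have : h.coeff 0 * h.coeff 0 = (q : ℤ) ^ g * (q : ℤ) ^ g := by
      rw [h0, ← pow_add, two_mul]
    exact mul_self_eq_mul_self_iff.mp this
  -- p divides all lower coefficients
  have hdvd : ∀ i < g, (p : ℤ) ∣ h.coeff i := by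
    intro i hi
    have hkey := key i (by omega)
    have hsplit : (q : ℤ) ^ (2 * g - i) = (q : ℤ) ^ g * (q : ℤ) ^ (g - i) := by
      rw [← pow_add]; congr 1; omega
    rw [hsplit] at hkey
    have hqdvd : (q : ℤ) ∣ (q : ℤ) ^ (g - i) := dvd_pow_self _ (by omega)
    rcases ha0 with h0 | h0
    · have heq : (q : ℤ) ^ g * h.coeff i
          = (q : ℤ) ^ g * ((q : ℤ) ^ (g - i) * h.coeff (2 * g - i)) := by
        linear_combination hkey - h.coeff i * h0
      have h2 := mul_left_cancel₀ (pow_ne_zero g hqz) heq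
      rw [h2]
      exact dvd_mul_of_dvd_left (hpq.trans hqdvd) _
    · have heq : (q : ℤ) ^ g * (-(h.coeff i))
          = (q : ℤ) ^ g * ((q : ℤ) ^ (g - i) * h.coeff (2 * g - i)) := by
        linear_combination hkey - h.coeff i * h0
      have h2 := mul_left_cancel₀ (pow_ne_zero g hqz) heq
      have h3 : h.coeff i = -((q : ℤ) ^ (g - i) * h.coeff (2 * g - i)) := by linarith
      rw [h3]
      exact (dvd_mul_of_dvd_left (hpq.trans hqdvd) _).neg_right
  -- reduce to divisibility of the middle coefficient
  have hpp : Prime ((p : ℤ)) := Nat.prime_iff_prime_int.mp hp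
  rw [isCoprime_comm (R := ℤ), hpp.coprime_iff_not_dvd]
  apply not_congr
  rw [Polynomial.X_pow_dvd_iff]
  constructor
  · intro hall
    have := hall g (lt_add_one g)
    rw [coeff_map] at this
    exact (ZMod.intCast_zmod_eq_zero_iff_dvd _ _).mp this
  · intro hdg d hd
    rw [coeff_map]
    apply (ZMod.intCast_zmod_eq_zero_iff_dvd _ _).mpr
    rcases lt_or_eq_of_le (Nat.lt_succ_iff.mp hd) with h' | h'
    · exact hdvd d h'
    · rw [h']; exact hdg
end
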